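/- arXiv:1712.03809 — 2 statements merged into one kernel-verified Lean document; each statement's English description precedes it below -/
import Mathlib

section
/- With π an exchangeable random permutation of {1,…,N} as above, C_j the number of j-cycles, and L_1, L_2 the lengths of the first two cycles (ordered by least element), one has for 1 ≤ j ≤ N: ℙ(L_1 = j, L_2 = j) = E( (jC_j/N) · (j(C_j − 1)/(N − j)) ). Consequently, Var(C_j/N) = ((N−j)/N) · ℙ(L_1 = j, L_2 = j)/j² + ℙ(L_1 = j)/(Nj) − (ℙ(L_1 = j)/j)². -/
open scoped Classical

/-- Number of cycles of length `j` in a permutation (fixed points count as cycles of length 1). -/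
noncomputable def cycleCount {n : ℕ} (σ : Equiv.Perm (Fin n)) (j : ℕ) : ℕ :=
  if j = 1 then Fintype.card {x : Fin n // σ x = x} else Multiset.count j σ.cycleType

/-- `covered σ k` is the union of the first `k` cycles of `σ`, ordered by least element. -/
noncomputable def covered {N : ℕ} (σ : Equiv.Perm (Fin N)) : ℕ → Finset (Fin N)
  | 0 => ∅
  | k + 1 =>
    if h : ((covered σ k)ᶜ : Finset (Fin N)).Nonempty then
      covered σ k ∪
        Finset.univ.filter fun y => σ.SameCycle (((covered σ k)ᶜ : Finset (Fin N)).min' h) y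
    else covered σ k

/-- `cycleLenSeq σ k` is the length `L_{k+1}` of the `(k+1)`-st cycle of `σ` in the order of
least elements (and `0` once the cycles are exhausted). -/
noncomputable def cycleLenSeq {N : ℕ} (σ : Equiv.Perm (Fin N)) (k : ℕ) : ℕ :=
  (covered σ (k + 1)).card - (covered σ k).card

open Equiv Finset

variable {N : ℕ}

noncomputable def classSet (σ : Perm (Fin N)) (x : Fin N) : Finset (Fin N) :=
  Finset.univ.filter fun y => σ.SameCycle x y

noncomputable def len (σ : Perm (Fin N)) (x : Fin N) : ℕ := (classSet σ x).card

lemma mem_classSet {σ : Perm (Fin N)} {x y : Fin N} : y ∈ classSet σ x ↔ σ.SameCycle x y := by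
  simp [classSet]

lemma self_mem_classSet (σ : Perm (Fin N)) (x : Fin N) : x ∈ classSet σ x :=
  mem_classSet.2 (Equiv.Perm.SameCycle.refl _ _)

lemma classSet_eq_of_sameCycle {σ : Perm (Fin N)} {x y : Fin N} (h : σ.SameCycle x y) :
    classSet σ x = classSet σ y := by
  ext z; simp only [mem_classSet]
  exact ⟨fun hz => h.symm.trans hz, fun hz => h.trans hz⟩

lemma classSet_disjoint {σ : Perm (Fin N)} {x y : Fin N} (h : ¬ σ.SameCycle x y) :
    Disjoint (classSet σ x) (classSet σ y) := by
  rw [Finset.disjoint_left]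
  intro z hz hz'
  exact h ((mem_classSet.1 hz).trans (mem_classSet.1 hz').symm)

lemma covered_zero (σ : Perm (Fin N)) : covered σ 0 = ∅ := rfl

lemma covered_succ (σ : Perm (Fin N)) (k : ℕ) : covered σ (k+1) =
    if h : ((covered σ k)ᶜ : Finset (Fin N)).Nonempty then
      covered σ k ∪
        Finset.univ.filter (fun y => σ.SameCycle (((covered σ k)ᶜ : Finset (Fin N)).min' h) y)
    else covered σ k := rfl

lemma min'_congr {α : Type*} [LinearOrder α] {s t : Finset α} (h : s = t) (hs : s.Nonempty)
    (ht : t.Nonempty) : s.min' hs = t.min' ht := by subst h; rfl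

lemma covered_one (hN : 0 < N) (σ : Perm (Fin N)) :
    covered σ 1 = classSet σ (Finset.univ.min' ⟨⟨0, hN⟩, Finset.mem_univ _⟩) := by
  have hc : ((covered σ 0)ᶜ : Finset (Fin N)) = Finset.univ := by
    simp [covered_zero]
  have hpos : ((covered σ 0)ᶜ : Finset (Fin N)).Nonempty := by
    rw [hc]; exact ⟨⟨0, hN⟩, Finset.mem_univ _⟩
  have hm : ((covered σ 0)ᶜ : Finset (Fin N)).min' hpos =
      Finset.univ.min' ⟨⟨0, hN⟩, Finset.mem_univ _⟩ :=
    min'_congr hc hpos ⟨⟨0, hN⟩, Finset.mem_univ _⟩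
  rw [covered_succ, dif_pos hpos, hm, covered_zero, Finset.empty_union]
  rfl

lemma cycleLenSeq_zero (hN : 0 < N) (σ : Perm (Fin N)) :
    cycleLenSeq σ 0 = len σ (Finset.univ.min' ⟨⟨0, hN⟩, Finset.mem_univ _⟩) := by
  rw [cycleLenSeq, covered_one hN, covered_zero]
  simp [len]

lemma cycleLenSeq_one_of_nonempty (hN : 0 < N) (σ : Perm (Fin N))
    (h1 : ((covered σ 1)ᶜ : Finset (Fin N)).Nonempty) :
    cycleLenSeq σ 1 = len σ (((covered σ 1)ᶜ : Finset (Fin N)).min' h1) := by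
  set m := ((covered σ 1)ᶜ : Finset (Fin N)).min' h1 with hm_def
  have hm : m ∉ covered σ 1 := by
    have := Finset.min'_mem _ h1
    simpa [Finset.mem_compl] using this
  have hdisj : Disjoint (covered σ 1) (classSet σ m) := by
    rw [covered_one hN] at hm ⊢
    exact classSet_disjoint (fun hc => hm (mem_classSet.2 hc))
  have : cycleLenSeq σ 1 = (covered σ 1 ∪ classSet σ m).card - (covered σ 1).card := by
    rw [cycleLenSeq, covered_succ, dif_pos h1]
    rfl
  rw [this, Finset.card_union_of_disjoint hdisj]
  simp [len]

lemma cycleLenSeq_one_of_empty (σ : Perm (Fin N))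
    (h1 : ¬ ((covered σ 1)ᶜ : Finset (Fin N)).Nonempty) : cycleLenSeq σ 1 = 0 := by
  rw [cycleLenSeq, covered_succ, dif_neg h1]
  simp

lemma len_eq_one_iff {σ : Perm (Fin N)} {x : Fin N} : len σ x = 1 ↔ σ x = x := by
  constructor
  · intro h
    by_contra hx
    have hsub : ({x, σ x} : Finset (Fin N)) ⊆ classSet σ x := by
      intro z hz
      rcases Finset.mem_insert.1 hz with h' | hz'
      · rw [h']; exact self_mem_classSet σ _
      · rw [Finset.mem_singleton] at hz'
        rw [hz']
        exact mem_classSet.2 ⟨1, by simp⟩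
    have h2 : ({x, σ x} : Finset (Fin N)).card = 2 := Finset.card_pair (fun he => hx he.symm)
    have hle := Finset.card_le_card hsub
    rw [h2] at hle
    have hlen : (classSet σ x).card = len σ x := rfl
    omega
  · intro h
    have : classSet σ x = {x} := by
      ext z
      simp only [mem_classSet, Finset.mem_singleton]
      constructor
      · rintro ⟨i, hi⟩
        rw [Equiv.Perm.zpow_apply_eq_self_of_apply_eq_self h] at hi
        exact hi.symm
      · rintro rfl; exact Equiv.Perm.SameCycle.refl _ _
    rw [len, this, Finset.card_singleton]

lemma classSet_eq_support_cycleOf {σ : Perm (Fin N)} {x : Fin N} (hx : σ x ≠ x) :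
    classSet σ x = (σ.cycleOf x).support := by
  ext y
  rw [mem_classSet, Equiv.Perm.mem_support_cycleOf_iff]
  simp [Equiv.Perm.mem_support, hx]

lemma jpts_card {j : ℕ} (hj1 : 1 ≤ j) (σ : Perm (Fin N)) :
    (Finset.univ.filter fun x => len σ x = j).card = j * cycleCount σ j := by
  rcases eq_or_ne j 1 with rfl | hj
  · rw [cycleCount, if_pos rfl]
    rw [Fintype.card_subtype]
    simp only [len_eq_one_iff, one_mul]
  · rw [cycleCount, if_neg hj]
    have hj2 : 2 ≤ j := by omega
    have key : (Finset.univ.filter fun x => len σ x = j) =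
        (σ.cycleFactorsFinset.filter fun c => c.support.card = j).biUnion
          (fun c => c.support) := by
      ext x
      simp only [Finset.mem_filter, Finset.mem_univ, true_and, Finset.mem_biUnion]
      constructor
      · intro hx
        have hfix : σ x ≠ x := by
          intro h
          rw [len_eq_one_iff.2 h] at hx
          omega
        refine ⟨σ.cycleOf x, ⟨Equiv.Perm.cycleOf_mem_cycleFactorsFinset_iff.2
          (Equiv.Perm.mem_support.2 hfix), ?_⟩, ?_⟩
        · rw [← classSet_eq_support_cycleOf hfix]
          exact hx
        · rw [Equiv.Perm.mem_support_cycleOf_iff]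
          exact ⟨Equiv.Perm.SameCycle.refl _ _, Equiv.Perm.mem_support.2 hfix⟩
      · rintro ⟨c, hc, hxc⟩
        have hcx : c = σ.cycleOf x := Equiv.Perm.cycle_is_cycleOf hxc hc.1
        have hfix : σ x ≠ x := by
          have hx_supp : x ∈ σ.support := by
            have := Equiv.Perm.support_cycleOf_le σ x
            rw [← hcx] at this
            exact this hxc
          exact Equiv.Perm.mem_support.1 hx_supp
        rw [len, classSet_eq_support_cycleOf hfix, ← hcx]
        exact hc.2
    rw [key, Finset.card_biUnion]
    · have : ∀ c ∈ σ.cycleFactorsFinset.filter fun c => c.support.card = j,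
          c.support.card = j := fun c hc => (Finset.mem_filter.1 hc).2
      rw [Finset.sum_congr rfl this, Finset.sum_const, smul_eq_mul, mul_comm]
      congr 1
      have h1 : Multiset.count j σ.cycleType =
          Multiset.card (Multiset.filter (fun c : Perm (Fin N) => c.support.card = j)
            σ.cycleFactorsFinset.val) := by
        rw [Equiv.Perm.cycleType, Multiset.count_map]
        congr 1
        apply Multiset.filter_congr
        intro a _
        exact eq_comm
      rw [h1, ← Finset.filter_val]
      rfl
    · intro c1 h1 c2 h2 hne
      exact Equiv.Perm.Disjoint.disjoint_support
        (σ.cycleFactorsFinset_pairwise_disjoint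
          (Finset.mem_coe.2 (Finset.mem_filter.1 h1).1)
          (Finset.mem_coe.2 (Finset.mem_filter.1 h2).1) hne)

lemma classSet_card_eq_len (σ : Perm (Fin N)) (x : Fin N) : (classSet σ x).card = len σ x := rfl

lemma len_eq_of_mem_classSet {σ : Perm (Fin N)} {x y : Fin N} (h : y ∈ classSet σ x) :
    len σ y = len σ x := by
  rw [len, len, classSet_eq_of_sameCycle (mem_classSet.1 h)]

lemma cycleCount_top_le_one (hN : 0 < N) (σ : Perm (Fin N)) : cycleCount σ N ≤ 1 := by
  by_contra h
  have h2 : 2 ≤ cycleCount σ N := by omega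
  have := jpts_card hN σ
  have hle : (Finset.univ.filter fun x => len σ x = N).card ≤ N := by
    calc (Finset.univ.filter fun x => len σ x = N).card ≤ (Finset.univ : Finset (Fin N)).card :=
      Finset.card_le_card (Finset.filter_subset _ _)
    _ = N := by simp
  nlinarith

lemma conj_zpow' (σ τ : Perm (Fin N)) (i : ℤ) : (τ * σ * τ⁻¹) ^ i = τ * σ ^ i * τ⁻¹ := by
  simpa [MulAut.conj_apply] using (map_zpow (MulAut.conj τ) σ i)

lemma sameCycle_conj {σ τ : Perm (Fin N)} {a b : Fin N} :
    (τ * σ * τ⁻¹).SameCycle a b ↔ σ.SameCycle (τ⁻¹ a) (τ⁻¹ b) := by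
  constructor
  · rintro ⟨i, hi⟩
    refine ⟨i, ?_⟩
    rw [conj_zpow'] at hi
    simp only [Equiv.Perm.mul_apply] at hi
    rw [← hi]; simp
  · rintro ⟨i, hi⟩
    refine ⟨i, ?_⟩
    rw [conj_zpow']
    simp only [Equiv.Perm.mul_apply]
    rw [hi]; simp

lemma classSet_conj (σ τ : Perm (Fin N)) (a : Fin N) :
    classSet (τ * σ * τ⁻¹) a = (classSet σ (τ⁻¹ a)).image τ := by
  ext z
  simp only [mem_classSet, Finset.mem_image, sameCycle_conj]
  constructor
  · intro h; exact ⟨τ⁻¹ z, h, by simp⟩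
  · rintro ⟨w, hw, rfl⟩; simpa using hw

lemma len_conj (σ τ : Perm (Fin N)) (a : Fin N) :
    len (τ * σ * τ⁻¹) a = len σ (τ⁻¹ a) := by
  rw [len, len, classSet_conj, Finset.card_image_of_injective _ τ.injective]

lemma exists_glue {A B : Finset (Fin N)} (hcard : A.card = B.card)
    {a a' b b' : Fin N} (ha : a ∈ A) (ha' : a' ∈ B) (hb : b ∉ A) (hb' : b' ∉ B) :
    ∃ ρ : Perm (Fin N), ρ a = a' ∧ ρ b = b' ∧ A.image ρ = B := by
  have h1 : Fintype.card {z : Fin N // z ∈ A} = Fintype.card {z : Fin N // z ∈ B} := by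
    simp [Fintype.card_coe, hcard]
  have h2 : Fintype.card {z : Fin N // ¬ z ∈ A} = Fintype.card {z : Fin N // ¬ z ∈ B} := by
    rw [Fintype.card_subtype_compl, Fintype.card_subtype_compl, h1]
  classical
  let f0 := Fintype.equivOfCardEq h1
  let f := f0.trans (Equiv.swap (f0 ⟨a, ha⟩) ⟨a', ha'⟩)
  let g0 := Fintype.equivOfCardEq h2
  let g := g0.trans (Equiv.swap (g0 ⟨b, hb⟩) ⟨b', hb'⟩)
  have hfa : f ⟨a, ha⟩ = ⟨a', ha'⟩ := by simp [f]
  have hgb : g ⟨b, hb⟩ = ⟨b', hb'⟩ := by simp [g]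
  have key : ∀ (z : Fin N) (hz : z ∈ A), Equiv.subtypeCongr f g z = (f ⟨z, hz⟩ : Fin N) := by
    intro z hz
    simp [Equiv.subtypeCongr, hz]
  have key2 : ∀ (z : Fin N) (hz : ¬ z ∈ A), Equiv.subtypeCongr f g z = (g ⟨z, hz⟩ : Fin N) := by
    intro z hz
    simp [Equiv.subtypeCongr, hz]
  refine ⟨Equiv.subtypeCongr f g, ?_, ?_, ?_⟩
  · rw [key a ha, hfa]
  · rw [key2 b hb, hgb]
  · apply Finset.eq_of_subset_of_card_le
    · intro z hz
      rcases Finset.mem_image.1 hz with ⟨w, hw, rfl⟩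
      rw [key w hw]
      exact (f ⟨w, hw⟩).2
    · rw [Finset.card_image_of_injective _ (Equiv.subtypeCongr f g).injective, hcard]

lemma fiber_count {β : Type*} [DecidableEq β] (Φ : Perm (Fin N) → β) (O : Finset β)
    (hmem : ∀ τ, Φ τ ∈ O)
    (htrans : ∀ b1 ∈ O, ∀ b2 ∈ O, ∃ ρ : Perm (Fin N), ∀ τ, Φ (ρ * τ) = b2 ↔ Φ τ = b1)
    {b : β} (hb : b ∈ O) :
    (Finset.univ.filter fun τ : Perm (Fin N) => Φ τ = b).card * O.card = Nat.factorial N := by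
  have key : ∀ b1 ∈ O, ∀ b2 ∈ O,
      (Finset.univ.filter fun τ => Φ τ = b1).card =
        (Finset.univ.filter fun τ => Φ τ = b2).card := by
    intro b1 h1 b2 h2
    obtain ⟨ρ, hρ⟩ := htrans b1 h1 b2 h2
    apply Finset.card_bij' (fun τ _ => ρ * τ) (fun τ _ => ρ⁻¹ * τ)
    · intro τ hτ
      rw [Finset.mem_filter] at hτ ⊢
      exact ⟨Finset.mem_univ _, (hρ τ).2 hτ.2⟩
    · intro τ hτ
      rw [Finset.mem_filter] at hτ ⊢
      refine ⟨Finset.mem_univ _, ?_⟩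
      have := hρ (ρ⁻¹ * τ)
      rw [mul_inv_cancel_left] at this
      exact this.1 hτ.2
    · intro τ _; rw [inv_mul_cancel_left]
    · intro τ _; rw [mul_inv_cancel_left]
  have total : ∑ b' ∈ O, (Finset.univ.filter fun τ : Perm (Fin N) => Φ τ = b').card =
      Nat.factorial N := by
    rw [← Finset.card_eq_sum_card_fiberwise (fun τ _ => hmem τ)]
    rw [Finset.card_univ, Fintype.card_perm, Fintype.card_fin]
  calc (Finset.univ.filter fun τ : Perm (Fin N) => Φ τ = b).card * O.card
      = ∑ b' ∈ O, (Finset.univ.filter fun τ : Perm (Fin N) => Φ τ = b).card := by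
        rw [Finset.sum_const, smul_eq_mul, mul_comm]
    _ = ∑ b' ∈ O, (Finset.univ.filter fun τ : Perm (Fin N) => Φ τ = b').card :=
        Finset.sum_congr rfl (fun b' hb' => (key b hb b' hb').symm ▸ (key b hb b' hb'))
    _ = Nat.factorial N := total

noncomputable def shapeO (N j : ℕ) : Finset (Fin N × Fin N × Finset (Fin N)) :=
  (Finset.univ.powersetCard j).biUnion fun T => (T ×ˢ Tᶜ).image fun ab => (ab.1, ab.2, T)

lemma mem_shapeO {j : ℕ} {v : Fin N × Fin N × Finset (Fin N)} :
    v ∈ shapeO N j ↔ v.2.2.card = j ∧ v.1 ∈ v.2.2 ∧ v.2.1 ∉ v.2.2 := by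
  rcases v with ⟨a, b, T⟩
  simp only [shapeO, Finset.mem_biUnion, Finset.mem_image, Finset.mem_powersetCard_univ,
    Finset.mem_product, Prod.ext_iff]
  constructor
  · rintro ⟨T', hT', ⟨a', b'⟩, ⟨ha', hb'⟩, ⟨rfl, rfl, rfl⟩⟩
    exact ⟨hT', ha', by simpa using hb'⟩
  · rintro ⟨hT, ha, hb⟩
    exact ⟨T, hT, ⟨a, b⟩, ⟨ha, by simpa using hb⟩, rfl, rfl, rfl⟩

lemma card_shapeO {j : ℕ} (hjN : j ≤ N) :
    (shapeO N j).card = N.choose j * (j * (N - j)) := by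
  rw [shapeO, Finset.card_biUnion]
  · have h1 : ∀ T ∈ Finset.univ.powersetCard j,
        ((T ×ˢ Tᶜ).image fun ab : Fin N × Fin N => (ab.1, ab.2, T)).card = j * (N - j) := by
      intro T hT
      rw [Finset.mem_powersetCard_univ] at hT
      rw [Finset.card_image_of_injective, Finset.card_product, Finset.card_compl, hT,
        Fintype.card_fin]
      intro ab cd h
      rw [Prod.ext_iff, Prod.ext_iff] at h
      exact Prod.ext h.1 h.2.1
    rw [Finset.sum_congr rfl h1, Finset.sum_const, smul_eq_mul, Finset.card_powersetCard,
      Finset.card_univ, Fintype.card_fin]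
  · intro T1 h1 T2 h2 hne
    dsimp only [Function.onFun]
    rw [Finset.disjoint_left]
    rintro v hv1 hv2
    rcases Finset.mem_image.1 hv1 with ⟨ab, _, rfl⟩
    rcases Finset.mem_image.1 hv2 with ⟨cd, _, h⟩
    rw [Prod.ext_iff, Prod.ext_iff] at h
    exact hne h.2.2.symm

noncomputable def mmin (z₀ : Fin N) (A : Finset (Fin N)) : Fin N :=
  if h : A.Nonempty then A.min' h else z₀

lemma mmin_mem {z₀ : Fin N} {A : Finset (Fin N)} (h : A.Nonempty) : mmin z₀ A ∈ A := by
  rw [mmin, dif_pos h]; exact Finset.min'_mem _ _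

noncomputable def idxI (σ : Perm (Fin N)) (j : ℕ) (z₀ : Fin N) :
    Finset (Fin N × Fin N × Finset (Fin N)) :=
  (Finset.univ.filter fun x => len σ x = j).biUnion fun x =>
    ((((Finset.univ.filter fun y => len σ y = j)) \ classSet σ x) ×ˢ
      (Finset.univ.filter fun S : Finset (Fin N) => z₀ ∈ S ∧ S.card = j)).image
      fun yS => (x, yS.1, yS.2)

lemma mem_idxI {σ : Perm (Fin N)} {j : ℕ} {z₀ : Fin N} {v : Fin N × Fin N × Finset (Fin N)} :
    v ∈ idxI σ j z₀ ↔ len σ v.1 = j ∧ len σ v.2.1 = j ∧ v.2.1 ∉ classSet σ v.1 ∧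
      z₀ ∈ v.2.2 ∧ v.2.2.card = j := by
  rcases v with ⟨x, y, S⟩
  simp only [idxI, Finset.mem_biUnion, Finset.mem_image, Finset.mem_filter, Finset.mem_univ,
    true_and, Finset.mem_product, Finset.mem_sdiff, Prod.ext_iff]
  constructor
  · rintro ⟨x', hx', ⟨y', S'⟩, ⟨⟨⟨hy', hy2⟩, hS'⟩, rfl, rfl, rfl⟩⟩
    exact ⟨hx', hy', hy2, hS'.1, hS'.2⟩
  · rintro ⟨hx, hy, hy2, hS1, hS2⟩
    exact ⟨x, hx, ⟨y, S⟩, ⟨⟨⟨hy, hy2⟩, hS1, hS2⟩, rfl, rfl, rfl⟩⟩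

lemma card_Sset {j : ℕ} (hj1 : 1 ≤ j) (z₀ : Fin N) :
    (Finset.univ.filter fun S : Finset (Fin N) => z₀ ∈ S ∧ S.card = j).card =
      (N - 1).choose (j - 1) := by
  have h : (Finset.univ.filter fun S : Finset (Fin N) => z₀ ∈ S ∧ S.card = j).card =
      ((Finset.univ.erase z₀).powersetCard (j - 1)).card := by
    apply Finset.card_bij' (fun S _ => S.erase z₀) (fun T _ => insert z₀ T)
    · intro S hS
      rw [Finset.mem_filter] at hS
      exact Finset.insert_erase hS.2.1
    · intro T hT
      rw [Finset.mem_powersetCard] at hT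
      exact Finset.erase_insert (fun h => Finset.notMem_erase z₀ _ (hT.1 h))
    · intro S hS
      rw [Finset.mem_filter] at hS
      rw [Finset.mem_powersetCard]
      constructor
      · intro z hz
        rw [Finset.mem_erase] at hz ⊢
        exact ⟨hz.1, Finset.mem_univ _⟩
      · rw [Finset.card_erase_of_mem hS.2.1, hS.2.2]
    · intro T hT
      rw [Finset.mem_powersetCard] at hT
      have hz : z₀ ∉ T := fun h => Finset.notMem_erase z₀ _ (hT.1 h)
      rw [Finset.mem_filter]
      refine ⟨Finset.mem_univ _, Finset.mem_insert_self _ _, ?_⟩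
      rw [Finset.card_insert_of_notMem hz, hT.2]
      omega
  rw [h, Finset.card_powersetCard, Finset.card_erase_of_mem (Finset.mem_univ _),
    Finset.card_univ, Fintype.card_fin]

lemma classSet_subset_jpts {σ : Perm (Fin N)} {j : ℕ} {x : Fin N} (hx : len σ x = j) :
    classSet σ x ⊆ Finset.univ.filter fun y => len σ y = j := by
  intro y hy
  rw [Finset.mem_filter]
  exact ⟨Finset.mem_univ _, (len_eq_of_mem_classSet hy).trans hx⟩

lemma card_idxI {σ : Perm (Fin N)} {j : ℕ} (hj1 : 1 ≤ j) (z₀ : Fin N) :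
    (idxI σ j z₀).card =
      (j * cycleCount σ j) * ((j * cycleCount σ j - j) * ((N - 1).choose (j - 1))) := by
  rw [idxI, Finset.card_biUnion]
  · have h1 : ∀ x ∈ Finset.univ.filter fun x => len σ x = j,
        (((((Finset.univ.filter fun y => len σ y = j)) \ classSet σ x) ×ˢ
          (Finset.univ.filter fun S : Finset (Fin N) => z₀ ∈ S ∧ S.card = j)).image
          fun yS => (x, yS.1, yS.2)).card =
        (j * cycleCount σ j - j) * ((N - 1).choose (j - 1)) := by
      intro x hx
      rw [Finset.mem_filter] at hx
      rw [Finset.card_image_of_injective, Finset.card_product, Finset.card_sdiff_of_subset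
        (classSet_subset_jpts hx.2), jpts_card hj1, classSet_card_eq_len, hx.2,
        card_Sset hj1]
      intro ab cd h
      rw [Prod.ext_iff, Prod.ext_iff] at h
      exact Prod.ext h.2.1 h.2.2
    rw [Finset.sum_congr rfl h1, Finset.sum_const, smul_eq_mul, jpts_card hj1]
  · intro x1 h1 x2 h2 hne
    dsimp only [Function.onFun]
    rw [Finset.disjoint_left]
    rintro v hv1 hv2
    rcases Finset.mem_image.1 hv1 with ⟨ab, _, rfl⟩
    rcases Finset.mem_image.1 hv2 with ⟨cd, _, h⟩
    rw [Prod.ext_iff] at h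
    exact hne h.1.symm

lemma cov1 (hN : 0 < N) (σ τ : Perm (Fin N)) :
    covered (τ * σ * τ⁻¹) 1 =
      (classSet σ (τ⁻¹ (Finset.univ.min' ⟨⟨0, hN⟩, Finset.mem_univ _⟩))).image τ := by
  rw [covered_one hN, classSet_conj]

lemma lens0 (hN : 0 < N) (σ τ : Perm (Fin N)) :
    cycleLenSeq (τ * σ * τ⁻¹) 0 =
      len σ (τ⁻¹ (Finset.univ.min' ⟨⟨0, hN⟩, Finset.mem_univ _⟩)) := by
  rw [cycleLenSeq_zero hN, len_conj]

lemma Acount (hN : 0 < N) {j : ℕ} (σ : Perm (Fin N)) :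
    (Finset.univ.filter fun τ : Perm (Fin N) => cycleLenSeq (τ * σ * τ⁻¹) 0 = j).card * N =
      (Finset.univ.filter fun x => len σ x = j).card * Nat.factorial N := by
  set z₀ : Fin N := Finset.univ.min' ⟨⟨0, hN⟩, Finset.mem_univ _⟩ with hz₀
  have hmemf : ∀ τ ∈ Finset.univ.filter fun τ : Perm (Fin N) => cycleLenSeq (τ * σ * τ⁻¹) 0 = j,
      τ⁻¹ z₀ ∈ Finset.univ.filter fun x => len σ x = j := by
    intro τ hτ
    rw [Finset.mem_filter] at hτ ⊢
    refine ⟨Finset.mem_univ _, ?_⟩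
    rw [← lens0 hN σ τ]
    exact hτ.2
  rw [Finset.card_eq_sum_card_fiberwise hmemf, Finset.sum_mul]
  have key : ∀ x ∈ Finset.univ.filter (fun x => len σ x = j),
      ((Finset.univ.filter fun τ : Perm (Fin N) => cycleLenSeq (τ * σ * τ⁻¹) 0 = j).filter
        (fun τ => τ⁻¹ z₀ = x)).card * N = Nat.factorial N := by
    intro x hx
    rw [Finset.mem_filter] at hx
    have hset : (Finset.univ.filter fun τ : Perm (Fin N) =>
          cycleLenSeq (τ * σ * τ⁻¹) 0 = j).filter (fun τ => τ⁻¹ z₀ = x) =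
        Finset.univ.filter fun τ : Perm (Fin N) => τ x = z₀ := by
      ext τ
      simp only [Finset.mem_filter, Finset.mem_univ, true_and]
      constructor
      · rintro ⟨_, h⟩; rw [← h]; simp
      · intro h
        have hinv : τ⁻¹ z₀ = x := by rw [← h]; simp
        refine ⟨?_, hinv⟩
        rw [lens0 hN σ τ, hinv]
        exact hx.2
    rw [hset]
    have hN' : (Finset.univ : Finset (Fin N)).card = N := by simp
    have := fiber_count (fun τ : Perm (Fin N) => τ x) Finset.univ
      (fun τ => Finset.mem_univ _) ?_ (Finset.mem_univ z₀)
    · rw [hN'] at this; exact this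
    · intro b1 _ b2 _
      refine ⟨Equiv.swap b1 b2, fun τ => ?_⟩
      simp only [Equiv.Perm.mul_apply]
      constructor
      · intro h
        have h2 := congrArg (Equiv.swap b1 b2) h
        simpa using h2
      · intro h; rw [h]; simp
  calc ∑ x ∈ Finset.univ.filter (fun x => len σ x = j),
        ((Finset.univ.filter fun τ : Perm (Fin N) =>
          cycleLenSeq (τ * σ * τ⁻¹) 0 = j).filter (fun τ => τ⁻¹ z₀ = x)).card * N
      = ∑ x ∈ Finset.univ.filter (fun x => len σ x = j), Nat.factorial N :=
        Finset.sum_congr rfl key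
    _ = (Finset.univ.filter fun x => len σ x = j).card * Nat.factorial N := by
        rw [Finset.sum_const, smul_eq_mul]

lemma Tcount (hN : 0 < N) {j : ℕ} (hj1 : 1 ≤ j) (hjN : j < N) (σ : Perm (Fin N)) :
    (Finset.univ.filter fun τ : Perm (Fin N) =>
        cycleLenSeq (τ * σ * τ⁻¹) 0 = j ∧ cycleLenSeq (τ * σ * τ⁻¹) 1 = j).card *
        (shapeO N j).card =
      (idxI σ j (Finset.univ.min' ⟨⟨0, hN⟩, Finset.mem_univ _⟩)).card * Nat.factorial N := by
  set z₀ : Fin N := Finset.univ.min' ⟨⟨0, hN⟩, Finset.mem_univ _⟩ with hz₀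
  set ψ : Perm (Fin N) → Fin N × Fin N × Finset (Fin N) := fun τ =>
    (τ⁻¹ z₀, τ⁻¹ (mmin z₀ ((classSet σ (τ⁻¹ z₀)).image τ)ᶜ), (classSet σ (τ⁻¹ z₀)).image τ)
    with hψ
  have himgcard : ∀ τ : Perm (Fin N), ((classSet σ (τ⁻¹ z₀)).image τ).card = len σ (τ⁻¹ z₀) := by
    intro τ
    rw [Finset.card_image_of_injective _ τ.injective, classSet_card_eq_len]
  -- complement of a j-set is nonempty
  have hcomplne : ∀ S : Finset (Fin N), S.card = j → (Sᶜ : Finset (Fin N)).Nonempty := by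
    intro S hS
    rw [← Finset.card_pos, Finset.card_compl, hS, Fintype.card_fin]
    omega
  have hmemf : ∀ τ ∈ Finset.univ.filter fun τ : Perm (Fin N) =>
      cycleLenSeq (τ * σ * τ⁻¹) 0 = j ∧ cycleLenSeq (τ * σ * τ⁻¹) 1 = j,
      ψ τ ∈ idxI σ j z₀ := by
    intro τ hτ
    rw [Finset.mem_filter] at hτ
    obtain ⟨-, h0, h1⟩ := hτ
    have hlenx : len σ (τ⁻¹ z₀) = j := by rw [← lens0 hN σ τ]; exact h0
    have hScard : ((classSet σ (τ⁻¹ z₀)).image τ).card = j := by rw [himgcard]; exact hlenx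
    have hcompl := hcomplne _ hScard
    have hcov := cov1 hN σ τ
    have hcovc : ((covered (τ * σ * τ⁻¹) 1)ᶜ : Finset (Fin N)) =
        ((classSet σ (τ⁻¹ z₀)).image τ)ᶜ := by rw [hcov]
    have hne : ((covered (τ * σ * τ⁻¹) 1)ᶜ : Finset (Fin N)).Nonempty := by
      rw [hcovc]; exact hcompl
    have hmin : ((covered (τ * σ * τ⁻¹) 1)ᶜ : Finset (Fin N)).min' hne =
        mmin z₀ ((classSet σ (τ⁻¹ z₀)).image τ)ᶜ := by
      rw [mmin, dif_pos hcompl]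
      exact min'_congr hcovc hne hcompl
    rw [cycleLenSeq_one_of_nonempty hN _ hne, hmin, len_conj] at h1
    rw [mem_idxI]
    refine ⟨hlenx, h1, ?_, ?_, hScard⟩
    · -- y ∉ classSet σ x
      intro hy
      have hmm : mmin z₀ ((classSet σ (τ⁻¹ z₀)).image τ)ᶜ ∈
          ((classSet σ (τ⁻¹ z₀)).image τ)ᶜ := mmin_mem hcompl
      rw [Finset.mem_compl] at hmm
      apply hmm
      have : τ (τ⁻¹ (mmin z₀ ((classSet σ (τ⁻¹ z₀)).image τ)ᶜ)) ∈
          (classSet σ (τ⁻¹ z₀)).image τ := Finset.mem_image_of_mem _ hy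
      simpa using this
    · -- z₀ ∈ S
      have : τ (τ⁻¹ z₀) ∈ (classSet σ (τ⁻¹ z₀)).image τ :=
        Finset.mem_image_of_mem _ (self_mem_classSet _ _)
      simpa [hψ] using this
  rw [Finset.card_eq_sum_card_fiberwise hmemf, Finset.sum_mul]
  have key : ∀ v ∈ idxI σ j z₀,
      ((Finset.univ.filter fun τ : Perm (Fin N) =>
        cycleLenSeq (τ * σ * τ⁻¹) 0 = j ∧ cycleLenSeq (τ * σ * τ⁻¹) 1 = j).filter
        (fun τ => ψ τ = v)).card * (shapeO N j).card = Nat.factorial N := by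
    rintro ⟨x, y, S⟩ hv
    rw [mem_idxI] at hv
    obtain ⟨hx, hy, hynot, hzS, hS⟩ := hv
    dsimp only at hx hy hynot hzS hS
    have hcompl := hcomplne S hS
    set m : Fin N := mmin z₀ Sᶜ with hm
    have hmS : m ∉ S := by
      have := mmin_mem (z₀ := z₀) hcompl
      rw [Finset.mem_compl] at this
      exact this
    have hfib_eq : (Finset.univ.filter fun τ : Perm (Fin N) =>
        cycleLenSeq (τ * σ * τ⁻¹) 0 = j ∧ cycleLenSeq (τ * σ * τ⁻¹) 1 = j).filter
        (fun τ => ψ τ = (x, y, S)) =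
        Finset.univ.filter fun τ : Perm (Fin N) =>
          (τ x, τ y, (classSet σ x).image τ) = (z₀, m, S) := by
      ext τ
      simp only [Finset.mem_filter, Finset.mem_univ, true_and, Prod.ext_iff, hψ]
      constructor
      · rintro ⟨-, hx', hy', hS'⟩
        have htx : τ x = z₀ := by rw [← hx']; simp
        rw [hx'] at hS' hy'
        refine ⟨htx, ?_, hS'⟩
        rw [hS'] at hy'
        rw [← hy']; simp [hm]
      · rintro ⟨htx, hty, himg⟩
        have hinvx : τ⁻¹ z₀ = x := by rw [← htx]; simp
        have hinvm : τ⁻¹ m = y := by rw [← hty]; simp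
        have hlenx : len σ (τ⁻¹ z₀) = j := by rw [hinvx]; exact hx
        have hcov := cov1 hN σ τ
        rw [hinvx, himg] at hcov
        have hcovc : ((covered (τ * σ * τ⁻¹) 1)ᶜ : Finset (Fin N)) = Sᶜ := by rw [hcov]
        have hne : ((covered (τ * σ * τ⁻¹) 1)ᶜ : Finset (Fin N)).Nonempty := by
          rw [hcovc]; exact hcompl
        have hmin : ((covered (τ * σ * τ⁻¹) 1)ᶜ : Finset (Fin N)).min' hne = m := by
          rw [hm, mmin, dif_pos hcompl]
          exact min'_congr hcovc hne hcompl
        refine ⟨⟨?_, ?_⟩, hinvx, ?_, ?_⟩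
        · rw [lens0 hN σ τ]; exact hlenx
        · rw [cycleLenSeq_one_of_nonempty hN _ hne, hmin, len_conj, hinvm]
          exact hy
        · rw [hinvx, himg, ← hm, hinvm]
        · rw [hinvx, himg]
    rw [hfib_eq]
    have hbO : ((z₀, m, S) : Fin N × Fin N × Finset (Fin N)) ∈ shapeO N j :=
      mem_shapeO.2 ⟨hS, hzS, hmS⟩
    have hxmem : x ∈ classSet σ x := self_mem_classSet _ _
    apply fiber_count (fun τ : Perm (Fin N) => (τ x, τ y, (classSet σ x).image τ))
      (shapeO N j) ?_ ?_ hbO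
    · intro τ
      rw [mem_shapeO]
      refine ⟨?_, Finset.mem_image_of_mem _ hxmem, ?_⟩
      · rw [Finset.card_image_of_injective _ τ.injective, classSet_card_eq_len, hx]
      · intro hmem
        rcases Finset.mem_image.1 hmem with ⟨w, hw, hww⟩
        exact hynot (by rwa [τ.injective hww] at hw)
    · rintro ⟨a1, b1, T1⟩ hb1 ⟨a2, b2, T2⟩ hb2
      rw [mem_shapeO] at hb1 hb2
      obtain ⟨hT1, ha1, hb1'⟩ := hb1
      obtain ⟨hT2, ha2, hb2'⟩ := hb2
      dsimp only at hT1 ha1 hb1' hT2 ha2 hb2'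
      obtain ⟨ρ, hρa, hρb, hρT⟩ := exists_glue (hT1.trans hT2.symm) ha1 ha2 hb1' hb2'
      refine ⟨ρ, fun τ => ?_⟩
      have himg : (classSet σ x).image ⇑(ρ * τ) = ((classSet σ x).image τ).image ρ := by
        rw [Finset.image_image]
        rfl
      simp only [Prod.ext_iff, Equiv.Perm.mul_apply, himg]
      constructor
      · rintro ⟨h1, h2, h3⟩
        rw [← hρa] at h1
        rw [← hρb] at h2
        rw [← hρT] at h3
        refine ⟨ρ.injective h1, ρ.injective h2, ?_⟩
        have h4 := congrArg (Finset.image ⇑ρ⁻¹) h3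
        simpa [Finset.image_image, Function.comp_def, Equiv.Perm.inv_def, Equiv.symm_apply_apply] using h4
      · rintro ⟨h1, h2, h3⟩
        rw [h1, h2, h3]
        exact ⟨hρa, hρb, hρT⟩
  calc ∑ v ∈ idxI σ j z₀,
        ((Finset.univ.filter fun τ : Perm (Fin N) =>
          cycleLenSeq (τ * σ * τ⁻¹) 0 = j ∧ cycleLenSeq (τ * σ * τ⁻¹) 1 = j).filter
          (fun τ => ψ τ = v)).card * (shapeO N j).card
      = ∑ _v ∈ idxI σ j z₀, Nat.factorial N := Finset.sum_congr rfl key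
    _ = (idxI σ j z₀).card * Nat.factorial N := by rw [Finset.sum_const, smul_eq_mul]

noncomputable def conjEquiv (τ : Perm (Fin N)) : Perm (Fin N) ≃ Perm (Fin N) where
  toFun σ := τ * σ * τ⁻¹
  invFun σ := τ⁻¹ * σ * τ
  left_inv σ := by group
  right_inv σ := by group

lemma symmetrize (p : Perm (Fin N) → ℝ)
    (hinv : ∀ τ σ : Perm (Fin N), p (τ * σ * τ⁻¹) = p σ)
    (g : Perm (Fin N) → Prop) [DecidablePred g] :
    (∑ σ ∈ Finset.univ.filter g, p σ) * (Nat.factorial N : ℝ) =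
      ∑ σ : Perm (Fin N), p σ *
        ((Finset.univ.filter fun τ : Perm (Fin N) => g (τ * σ * τ⁻¹)).card : ℝ) := by
  have h1 : ∀ σ : Perm (Fin N),
      p σ * ((Finset.univ.filter fun τ : Perm (Fin N) => g (τ * σ * τ⁻¹)).card : ℝ) =
      ∑ τ : Perm (Fin N), p σ * (if g (τ * σ * τ⁻¹) then (1 : ℝ) else 0) := by
    intro σ
    rw [← Finset.mul_sum, Finset.sum_boole]
  rw [Finset.sum_congr rfl fun σ _ => h1 σ, Finset.sum_comm]
  have h2 : ∀ τ : Perm (Fin N),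
      (∑ σ : Perm (Fin N), p σ * (if g (τ * σ * τ⁻¹) then (1 : ℝ) else 0)) =
      ∑ σ ∈ Finset.univ.filter g, p σ := by
    intro τ
    have e1 : ∀ σ : Perm (Fin N), p σ * (if g (τ * σ * τ⁻¹) then (1 : ℝ) else 0) =
        (fun π => p π * (if g π then (1 : ℝ) else 0)) (conjEquiv τ σ) := by
      intro σ
      simp only [conjEquiv, Equiv.coe_fn_mk]
      rw [hinv]
      rfl
    rw [Finset.sum_congr rfl fun σ _ => e1 σ, Equiv.sum_comp (conjEquiv τ)
      (fun π => p π * (if g π then (1 : ℝ) else 0)), Finset.sum_filter]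
    apply Finset.sum_congr rfl
    intro σ _
    by_cases h : g σ <;> simp [h]
  rw [Finset.sum_congr rfl fun τ _ => h2 τ, Finset.sum_const, Finset.card_univ,
    Fintype.card_perm, Fintype.card_fin, nsmul_eq_mul, mul_comm]

lemma len_pos (σ : Perm (Fin N)) (x : Fin N) : 0 < len σ x :=
  Finset.card_pos.2 ⟨x, self_mem_classSet σ x⟩

lemma realA (hN : 0 < N) {j : ℕ} (σ : Perm (Fin N)) :
    ((Finset.univ.filter fun τ : Perm (Fin N) => cycleLenSeq (τ * σ * τ⁻¹) 0 = j).card : ℝ) =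
      (Nat.factorial N : ℝ) * ((j : ℝ) * cycleCount σ j / N) := by
  have hc := Acount hN (j := j) σ
  have hj := jpts_card (σ := σ) (j := j)
  have hNne : (N : ℝ) ≠ 0 := Nat.cast_ne_zero.2 hN.ne'
  rcases eq_or_ne j 0 with rfl | hj0
  · -- j = 0 : filter is empty since cycleLenSeq σ 0 > 0
    have hempty : (Finset.univ.filter fun τ : Perm (Fin N) =>
        cycleLenSeq (τ * σ * τ⁻¹) 0 = 0) = ∅ := by
      rw [Finset.filter_eq_empty_iff]
      intro τ _
      rw [lens0 hN σ τ]
      have := len_pos σ (τ⁻¹ (Finset.univ.min' ⟨⟨0, hN⟩, Finset.mem_univ _⟩))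
      omega
    rw [hempty]
    simp
  · have hjc := jpts_card (Nat.one_le_iff_ne_zero.2 hj0) σ
    rw [hjc] at hc
    -- hc : Aset.card * N = (j * cycleCount σ j) * N!
    have : ((Finset.univ.filter fun τ : Perm (Fin N) =>
        cycleLenSeq (τ * σ * τ⁻¹) 0 = j).card : ℝ) * N =
        ((j : ℝ) * cycleCount σ j) * (Nat.factorial N : ℝ) := by
      exact_mod_cast congrArg (Nat.cast : ℕ → ℝ) hc
    field_simp at this ⊢
    linarith [this]

lemma realT (hN : 0 < N) {j : ℕ} (hj1 : 1 ≤ j) (hjN : j ≤ N) (σ : Perm (Fin N)) :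
    ((Finset.univ.filter fun τ : Perm (Fin N) =>
        cycleLenSeq (τ * σ * τ⁻¹) 0 = j ∧ cycleLenSeq (τ * σ * τ⁻¹) 1 = j).card : ℝ) =
      (Nat.factorial N : ℝ) * (((j : ℝ) * cycleCount σ j / N) *
        ((j : ℝ) * ((cycleCount σ j : ℝ) - 1) / ((N : ℝ) - j))) := by
  by_cases hlt : j < N
  · have hTc := Tcount hN hj1 hlt σ
    rw [card_shapeO hjN, card_idxI hj1] at hTc
    rcases Nat.eq_zero_or_pos (cycleCount σ j) with hc0 | hcpos
    · rw [hc0] at hTc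
      simp only [Nat.mul_zero, Nat.zero_mul] at hTc
      have hfac : 0 < N.choose j * (j * (N - j)) := by
        have h1 := Nat.choose_pos hjN
        have h2 : 0 < N - j := by omega
        positivity
      have hT0 : (Finset.univ.filter fun τ : Perm (Fin N) =>
          cycleLenSeq (τ * σ * τ⁻¹) 0 = j ∧ cycleLenSeq (τ * σ * τ⁻¹) 1 = j).card = 0 := by
        rcases Nat.mul_eq_zero.1 hTc with h | h
        · exact h
        · omega
      rw [hT0, hc0]
      simp
    · have hle1 : j ≤ j * cycleCount σ j := Nat.le_mul_of_pos_right j hcpos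
      have h := congrArg (Nat.cast : ℕ → ℝ) hTc
      push_cast [Nat.cast_sub hjN, Nat.cast_sub hle1, Nat.cast_sub hj1, Nat.cast_sub hN] at h
      -- choose identity
      have hchN : N * (N - 1).choose (j - 1) = N.choose j * j := by
        have := Nat.add_one_mul_choose_eq (N - 1) (j - 1)
        have e1 : N - 1 + 1 = N := by omega
        have e2 : j - 1 + 1 = j := by omega
        rw [e1, e2] at this
        exact this
      have hch : (N : ℝ) * ((N - 1).choose (j - 1) : ℝ) = (N.choose j : ℝ) * j := by
        exact_mod_cast congrArg (Nat.cast : ℕ → ℝ) hchN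
      have hNne : (N : ℝ) ≠ 0 := Nat.cast_ne_zero.2 hN.ne'
      have hNjne : (N : ℝ) - (j : ℝ) ≠ 0 := by
        have : (j : ℝ) < N := by exact_mod_cast hlt
        linarith
      have hOne : ((N.choose j : ℝ) * ((j : ℝ) * ((N : ℝ) - (j : ℝ)))) ≠ 0 := by
        have h1 : (0 : ℝ) < N.choose j := by exact_mod_cast Nat.choose_pos hjN
        have h2 : (0 : ℝ) < j := by exact_mod_cast hj1
        have h3 : (j : ℝ) < N := by exact_mod_cast hlt
        positivity
      apply mul_right_cancel₀ hOne
      rw [h]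
      have hi1 : (N : ℝ) * (N : ℝ)⁻¹ = 1 := mul_inv_cancel₀ hNne
      have hi2 : ((N : ℝ) - j) * ((N : ℝ) - j)⁻¹ = 1 := mul_inv_cancel₀ hNjne
      linear_combination ((Nat.factorial N : ℝ) * (j:ℝ)^2 * (cycleCount σ j) *
          ((cycleCount σ j : ℝ) - 1)) * (N : ℝ)⁻¹ * ((N : ℝ) - j) * ((N : ℝ) - j)⁻¹ * hch
        - ((Nat.factorial N : ℝ) * (j:ℝ)^2 * (cycleCount σ j) * ((cycleCount σ j : ℝ) - 1))
          * ((N - 1).choose (j - 1) : ℝ) * ((N : ℝ) - j) * ((N : ℝ) - j)⁻¹ * hi1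
        - ((Nat.factorial N : ℝ) * (j:ℝ)^2 * (cycleCount σ j) * ((cycleCount σ j : ℝ) - 1))
          * ((N - 1).choose (j - 1) : ℝ) * hi2
  · have hEq : j = N := le_antisymm hjN (not_lt.1 hlt)
    have hempty : (Finset.univ.filter fun τ : Perm (Fin N) =>
        cycleLenSeq (τ * σ * τ⁻¹) 0 = j ∧ cycleLenSeq (τ * σ * τ⁻¹) 1 = j) = ∅ := by
      rw [Finset.filter_eq_empty_iff]
      rintro τ - ⟨h0, h1⟩
      have hcard : (covered (τ * σ * τ⁻¹) 1).card = j := by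
        rw [covered_one hN]
        rw [cycleLenSeq_zero hN] at h0
        exact h0
      have huniv : covered (τ * σ * τ⁻¹) 1 = Finset.univ := by
        apply Finset.eq_univ_of_card
        rw [hcard, Fintype.card_fin]
        exact hEq
      have hne : ¬ ((covered (τ * σ * τ⁻¹) 1)ᶜ : Finset (Fin N)).Nonempty := by
        rw [huniv, Finset.compl_univ]
        simp
      rw [cycleLenSeq_one_of_empty _ hne] at h1
      omega
    have hz : (N : ℝ) - (j : ℝ) = 0 := by rw [hEq]; ring
    rw [hempty, hz]
    simp


/-- For an exchangeable random permutation: `ℙ(L_1 = j, L_2 = j) = E((jC_j/N)·(j(C_j−1)/(N−j)))`,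
and consequently
`Var(C_j/N) = ((N−j)/N)·ℙ(L_1=j,L_2=j)/j² + ℙ(L_1=j)/(Nj) − (ℙ(L_1=j)/j)²`. -/
theorem stmt10 (N : ℕ) (hN : 0 < N) (p : Equiv.Perm (Fin N) → ℝ)
    (hp0 : ∀ σ, 0 ≤ p σ) (hp1 : ∑ σ : Equiv.Perm (Fin N), p σ = 1)
    (hinv : ∀ τ σ : Equiv.Perm (Fin N), p (τ * σ * τ⁻¹) = p σ)
    (j : ℕ) (hj1 : 1 ≤ j) (hjN : j ≤ N) :
    (∑ σ ∈ Finset.univ.filter (fun σ : Equiv.Perm (Fin N) =>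
          cycleLenSeq σ 0 = j ∧ cycleLenSeq σ 1 = j), p σ =
        ∑ σ : Equiv.Perm (Fin N), p σ *
          (((j : ℝ) * cycleCount σ j / N) *
            ((j : ℝ) * ((cycleCount σ j : ℝ) - 1) / ((N : ℝ) - j)))) ∧
    ((∑ σ : Equiv.Perm (Fin N), p σ * ((cycleCount σ j : ℝ) / N) ^ 2) -
        (∑ σ : Equiv.Perm (Fin N), p σ * ((cycleCount σ j : ℝ) / N)) ^ 2 =
      (((N : ℝ) - j) / N) *
          (∑ σ ∈ Finset.univ.filter (fun σ : Equiv.Perm (Fin N) =>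
              cycleLenSeq σ 0 = j ∧ cycleLenSeq σ 1 = j), p σ) / (j : ℝ) ^ 2 +
        (∑ σ ∈ Finset.univ.filter (fun σ : Equiv.Perm (Fin N) =>
            cycleLenSeq σ 0 = j), p σ) / ((N : ℝ) * j) -
        ((∑ σ ∈ Finset.univ.filter (fun σ : Equiv.Perm (Fin N) =>
            cycleLenSeq σ 0 = j), p σ) / (j : ℝ)) ^ 2) := by
  have hfacne : (Nat.factorial N : ℝ) ≠ 0 := Nat.cast_ne_zero.2 (Nat.factorial_ne_zero N)
  have hNne : (N : ℝ) ≠ 0 := Nat.cast_ne_zero.2 hN.ne'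
  have hjne : (j : ℝ) ≠ 0 := Nat.cast_ne_zero.2 (by omega)
  have part1 : ∑ σ ∈ Finset.univ.filter (fun σ : Equiv.Perm (Fin N) =>
      cycleLenSeq σ 0 = j ∧ cycleLenSeq σ 1 = j), p σ =
      ∑ σ : Equiv.Perm (Fin N), p σ * (((j : ℝ) * cycleCount σ j / N) *
        ((j : ℝ) * ((cycleCount σ j : ℝ) - 1) / ((N : ℝ) - j))) := by
    apply mul_right_cancel₀ hfacne
    refine (symmetrize p hinv (fun σ => cycleLenSeq σ 0 = j ∧ cycleLenSeq σ 1 = j)).trans ?_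
    rw [Finset.sum_mul]
    apply Finset.sum_congr rfl
    intro σ _
    rw [realT hN hj1 hjN σ]
    ring
  have identity1 : ∑ σ ∈ Finset.univ.filter (fun σ : Equiv.Perm (Fin N) =>
      cycleLenSeq σ 0 = j), p σ =
      ∑ σ : Equiv.Perm (Fin N), p σ * ((j : ℝ) * cycleCount σ j / N) := by
    apply mul_right_cancel₀ hfacne
    refine (symmetrize p hinv (fun σ => cycleLenSeq σ 0 = j)).trans ?_
    rw [Finset.sum_mul]
    apply Finset.sum_congr rfl
    intro σ _
    rw [realA hN σ]
    ring
  refine ⟨part1, ?_⟩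
  have hE1 : ∑ σ : Equiv.Perm (Fin N), p σ * ((cycleCount σ j : ℝ) / N) =
      (∑ σ ∈ Finset.univ.filter (fun σ : Equiv.Perm (Fin N) =>
        cycleLenSeq σ 0 = j), p σ) / (j : ℝ) := by
    rw [identity1, Finset.sum_div]
    apply Finset.sum_congr rfl
    intro σ _
    field_simp
  have hE2 : ∑ σ : Equiv.Perm (Fin N), p σ * ((cycleCount σ j : ℝ) / N) ^ 2 =
      (((N : ℝ) - j) / N) *
          (∑ σ ∈ Finset.univ.filter (fun σ : Equiv.Perm (Fin N) =>
              cycleLenSeq σ 0 = j ∧ cycleLenSeq σ 1 = j), p σ) / (j : ℝ) ^ 2 +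
        (∑ σ ∈ Finset.univ.filter (fun σ : Equiv.Perm (Fin N) =>
            cycleLenSeq σ 0 = j), p σ) / ((N : ℝ) * j) := by
    rw [part1, identity1, Finset.mul_sum, Finset.sum_div, Finset.sum_div,
      ← Finset.sum_add_distrib]
    apply Finset.sum_congr rfl
    intro σ _
    by_cases hlt : j < N
    · have hNjne : (N : ℝ) - (j : ℝ) ≠ 0 := by
        have : (j : ℝ) < N := by exact_mod_cast hlt
        linarith
      field_simp
      ring
    · have hEq : j = N := le_antisymm hjN (not_lt.1 hlt)
      subst hEq
      have hcc : ((cycleCount σ j : ℝ)) ^ 2 = (cycleCount σ j : ℝ) := by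
        rcases Nat.le_one_iff_eq_zero_or_eq_one.1 (cycleCount_top_le_one hN σ) with h | h <;>
          rw [h] <;> norm_num
      rw [sub_self, div_zero, mul_zero, mul_zero, zero_div, zero_mul, zero_div, zero_add]
      field_simp
      linear_combination p σ * hcc
  rw [hE2, hE1]
end

section
/- For every w ∈ ℂ that is not of the form ik for k ∈ ℤ, one has ∑_{k∈ℤ} 1/(w² + k²) = π coth(πw)/w. -/
open Complex Real MeasureTheory Filter

/-- Partial fraction expansion of the hyperbolic cotangent:
`∑_{k∈ℤ} 1/(w² + k²) = π coth(πw)/w` for `w` not of the form `ik`, `k ∈ ℤ`. -/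
theorem stmt16 (w : ℂ) (hw : ∀ k : ℤ, w ≠ Complex.I * k) :
    ∑' k : ℤ, (w ^ 2 + (k : ℂ) ^ 2)⁻¹ =
      (Real.pi : ℂ) * Complex.cosh (Real.pi * w) /
        (Complex.sinh (Real.pi * w) * w) := by
  have hπ0 : (0:ℝ) < 2 * π := by positivity
  haveI hT : Fact ((0:ℝ) < 2 * π) := ⟨hπ0⟩
  have hπC : (π : ℂ) ≠ 0 := Complex.ofReal_ne_zero.mpr Real.pi_ne_zero
  have hw0 : w ≠ 0 := by simpa using hw 0
  have hc1 : ∀ n : ℤ, w - Complex.I * n ≠ 0 := fun n => sub_ne_zero.mpr (hw n)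
  have hc2 : ∀ n : ℤ, w + Complex.I * n ≠ 0 := by
    intro n h
    apply hw (-n)
    push_cast
    linear_combination h
  have hc2' : ∀ n : ℤ, -w - Complex.I * n ≠ 0 := by
    intro n h
    apply hc2 n
    linear_combination -h
  have hfact : ∀ n : ℤ, w ^ 2 + (n:ℂ) ^ 2 = (w - Complex.I*n) * (w + Complex.I*n) := by
    intro n
    linear_combination ((n:ℂ)^2) * Complex.I_sq
  have hwn : ∀ n : ℤ, w ^ 2 + (n:ℂ) ^ 2 ≠ 0 := by
    intro n
    rw [hfact n]; exact mul_ne_zero (hc1 n) (hc2 n)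
  have hsinh : Complex.sinh ((π:ℂ) * w) ≠ 0 := by
    intro h
    have h2 : Complex.sin ((π:ℂ) * w * Complex.I) = 0 := by
      rw [Complex.sin_mul_I, h, zero_mul]
    obtain ⟨k, hk⟩ := Complex.sin_eq_zero_iff.mp h2
    apply hw (-k)
    have h3 : w * Complex.I = (k:ℂ) := by
      apply mul_left_cancel₀ hπC
      linear_combination hk
    push_cast
    linear_combination (-Complex.I) * h3 + w * Complex.I_sq
  set g : ℝ → ℂ := fun x => Complex.cosh (w * (x - π)) with hg
  have hgcont : Continuous g := by fun_prop
  have hgper : g 0 = g (0 + 2 * π) := by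
    simp only [hg]
    rw [show w * (((0:ℝ):ℂ) - (π:ℝ)) = -(w * (π:ℝ)) by push_cast; ring,
      show w * (((0 + 2*π : ℝ):ℂ) - (π:ℝ)) = w * (π:ℝ) by push_cast; ring,
      Complex.cosh_neg]
  set f : C(AddCircle (2 * π), ℂ) :=
    ⟨AddCircle.liftIco (2*π) 0 g, AddCircle.liftIco_continuous hgper hgcont.continuousOn⟩ with hf
  set C : ℂ := Complex.sinh ((π:ℂ) * w) * w / (π:ℂ) with hC
  set E := Complex.exp (w * (π:ℝ)) with hE
  have hEne : E ≠ 0 := Complex.exp_ne_zero _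
  have hsinhE : Complex.sinh ((π:ℂ) * w) = (E - E⁻¹) / 2 := by
    rw [Complex.sinh, ← Complex.exp_neg]
    rw [show -((π:ℂ)*w) = -(w*(π:ℝ)) by push_cast; ring, show (π:ℂ)*w = w*(π:ℝ) by push_cast; ring]
  -- Fourier coefficients
  have hcoeff : ∀ n : ℤ, fourierCoeff (⇑f) n = C * (w ^ 2 + (n:ℂ) ^ 2)⁻¹ := by
    intro n
    rw [fourierCoeff_eq_intervalIntegral (⇑f) n 0]
    have hae : ∀ᵐ x : ℝ ∂volume, x ∈ Set.uIoc (0:ℝ) (0 + 2*π) →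
        (fourier (-n) (x : AddCircle (2*π)) : ℂ) • f x
          = (fourier (-n) (x : AddCircle (2*π)) : ℂ) • g x := by
      have hne : ∀ᵐ x : ℝ ∂volume, x ≠ 0 + 2*π := by
        rw [ae_iff]
        convert Real.volume_singleton (a := 0 + 2*π) using 2
        ext y; simp
      filter_upwards [hne] with x hx hmem
      rw [Set.uIoc_of_le (by linarith)] at hmem
      congr 1
      show AddCircle.liftIco (2*π) 0 g x = g x
      exact AddCircle.liftIco_coe_apply ⟨hmem.1.le, lt_of_le_of_ne hmem.2 hx⟩
    rw [intervalIntegral.integral_congr_ae hae]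
    have key : ∀ x : ℝ, (fourier (-n) (x : AddCircle (2*π)) : ℂ) • g x
        = Complex.exp ((w - Complex.I*n) * x) * E⁻¹ / 2
          + Complex.exp ((-w - Complex.I*n) * x) * E / 2 := by
      intro x
      rw [smul_eq_mul, fourier_coe_apply]
      simp only [hg]
      rw [Complex.cosh, hE, ← Complex.exp_neg]
      have e1 : Complex.exp (2 * (π:ℂ) * Complex.I * ((-n : ℤ):ℂ) * (x:ℂ) / ((2*π : ℝ):ℂ))
          * Complex.exp (w * ((x:ℂ) - (π:ℝ)))
          = Complex.exp ((w - Complex.I*n) * x) * Complex.exp (-(w * ((π:ℝ):ℂ))) := by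
        rw [← Complex.exp_add, ← Complex.exp_add]
        congr 1
        push_cast
        field_simp
        ring
      have e2 : Complex.exp (2 * (π:ℂ) * Complex.I * ((-n : ℤ):ℂ) * (x:ℂ) / ((2*π : ℝ):ℂ))
          * Complex.exp (-(w * ((x:ℂ) - (π:ℝ))))
          = Complex.exp ((-w - Complex.I*n) * x) * Complex.exp (w * ((π:ℝ):ℂ)) := by
        rw [← Complex.exp_add, ← Complex.exp_add]
        congr 1
        push_cast
        field_simp
        ring
      linear_combination e1 / 2 + e2 / 2
    rw [intervalIntegral.integral_congr (fun x _ => key x)]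
    rw [intervalIntegral.integral_add
        ((Continuous.intervalIntegrable (by fun_prop) _ _))
        ((Continuous.intervalIntegrable (by fun_prop) _ _)),
      intervalIntegral.integral_div, intervalIntegral.integral_div,
      intervalIntegral.integral_mul_const, intervalIntegral.integral_mul_const,
      integral_exp_mul_complex (hc1 n), integral_exp_mul_complex (hc2' n)]
    have e3 : Complex.exp ((w - Complex.I*n) * (((0:ℝ) + 2*π : ℝ):ℂ)) = E * E := by
      rw [show (w - Complex.I*n) * (((0:ℝ) + 2*π : ℝ):ℂ)
          = (w * (π:ℝ) + w * (π:ℝ)) + ((-n : ℤ):ℂ) * (2 * (π:ℝ) * Complex.I) by push_cast; ring,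
        Complex.exp_add, Complex.exp_add, Complex.exp_int_mul_two_pi_mul_I, mul_one, hE]
    have e4 : Complex.exp ((-w - Complex.I*n) * (((0:ℝ) + 2*π : ℝ):ℂ)) = E⁻¹ * E⁻¹ := by
      rw [show (-w - Complex.I*n) * (((0:ℝ) + 2*π : ℝ):ℂ)
          = (-(w * (π:ℝ)) + -(w * (π:ℝ))) + ((-n : ℤ):ℂ) * (2 * (π:ℝ) * Complex.I) by push_cast; ring,
        Complex.exp_add, Complex.exp_add, Complex.exp_int_mul_two_pi_mul_I, mul_one,
        Complex.exp_neg, hE]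
    have e5 : Complex.exp ((w - Complex.I*n) * (((0:ℝ):ℂ))) = 1 := by
      norm_num
    have e6 : Complex.exp ((-w - Complex.I*n) * (((0:ℝ):ℂ))) = 1 := by
      norm_num
    rw [e3, e4, e5, e6, Complex.real_smul, hC, hsinhE, hfact n]
    set a := Complex.I * (n:ℂ) with ha
    have ha1 : w - a ≠ 0 := hc1 n
    have ha2 : w + a ≠ 0 := hc2 n
    have ha3 : -w - a ≠ 0 := hc2' n
    clear_value a
    have ha4 : w^2 - a^2 ≠ 0 := fun h => (mul_ne_zero ha1 ha2) (by linear_combination h)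
    have ha5 : a^2 - w^2 ≠ 0 := fun h => ha4 (by linear_combination -h)
    field_simp [hEne, ha1, ha2, ha3, ha4, ha5]
    have hD : (-(E ^ 3 * w ^ 2 * (π:ℂ) * 8) + E ^ 3 * a ^ 2 * (π:ℂ) * 8) ≠ 0 := by
      intro h
      apply ha5
      have hE3 : E ^ 3 * (π:ℂ) * 8 ≠ 0 :=
        mul_ne_zero (mul_ne_zero (pow_ne_zero _ hEne) hπC) (by norm_num)
      apply mul_left_cancel₀ hE3
      linear_combination h
    push_cast
    field_simp
    ring
  -- Summability
  have hgsum : Summable (fun n : ℤ => 2 * (1 / (n:ℝ)^2)) :=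
    (Real.summable_one_div_int_pow.mpr one_lt_two).mul_left 2
  have hfin : {n : ℤ | (n:ℝ)^2 < 2*‖w‖^2 + 2}.Finite := by
    apply Set.Finite.subset (Set.finite_Icc (-(⌈2*‖w‖^2 + 2⌉)) ⌈2*‖w‖^2 + 2⌉)
    intro n hn
    simp only [Set.mem_setOf_eq] at hn
    have habs : |(n:ℝ)| ≤ 2*‖w‖^2 + 2 := by
      nlinarith [_root_.sq_abs (n:ℝ), mul_self_nonneg (|(n:ℝ)| - 1), sq_nonneg ‖w‖, abs_nonneg (n:ℝ)]
    have h1 : (n:ℝ) ≤ ((⌈2*‖w‖^2 + 2⌉ : ℤ) : ℝ) :=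
      le_trans (le_trans (le_abs_self _) habs) (Int.le_ceil _)
    have h2 : ((-(⌈2*‖w‖^2 + 2⌉) : ℤ) : ℝ) ≤ (n:ℝ) := by
      push_cast
      have := neg_abs_le (n:ℝ)
      have := Int.le_ceil (2*‖w‖^2 + 2)
      linarith
    exact ⟨by exact_mod_cast h2, by exact_mod_cast h1⟩
  have hbound : ∀ n : ℤ, 2*‖w‖^2 + 2 ≤ (n:ℝ)^2 →
      ‖(w ^ 2 + (n:ℂ) ^ 2)⁻¹‖ ≤ 2 * (1 / (n:ℝ)^2) := by
    intro n hn
    have hnormn : ‖((n:ℂ))^2‖ = (n:ℝ)^2 := by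
      rw [norm_pow, Complex.norm_intCast, _root_.sq_abs]
    have hw2 : ‖w^2‖ = ‖w‖^2 := norm_pow w 2
    have h1 : (n:ℝ)^2/2 ≤ ‖w^2 + (n:ℂ)^2‖ := by
      have h2 := norm_sub_norm_le ((n:ℂ)^2) (-(w^2))
      rw [sub_neg_eq_add, hnormn, norm_neg, hw2, add_comm] at h2
      linarith
    rw [norm_inv]
    have hpos : 0 < (n:ℝ)^2/2 := by nlinarith [sq_nonneg ‖w‖]
    calc ‖w^2 + (n:ℂ)^2‖⁻¹ ≤ ((n:ℝ)^2/2)⁻¹ := inv_anti₀ hpos h1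
      _ = 2 * (1 / (n:ℝ)^2) := by
        rw [div_eq_mul_inv, mul_inv, inv_inv, one_div, mul_comm]
  have hev : ∀ᶠ n : ℤ in Filter.cofinite, ‖(w ^ 2 + (n:ℂ) ^ 2)⁻¹‖ ≤ 2 * (1 / (n:ℝ)^2) := by
    rw [Filter.eventually_cofinite]
    apply Set.Finite.subset hfin
    intro n hn
    simp only [Set.mem_setOf_eq, not_le] at hn ⊢
    by_contra hcon
    push_neg at hcon
    exact absurd (hbound n hcon) (not_le.mpr hn)
  have hsum0 : Summable (fun n : ℤ => (w ^ 2 + (n:ℂ) ^ 2)⁻¹) :=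
    Summable.of_norm_bounded_eventually hgsum hev
  have hsumc : Summable (fourierCoeff (⇑f)) :=
    (hsum0.mul_left C).congr fun n => (hcoeff n).symm
  -- evaluate at 0
  have hps := has_pointwise_sum_fourier_series_of_summable hsumc (0 : AddCircle (2*π))
  have hf0 : f (0 : AddCircle (2*π)) = Complex.cosh ((π:ℂ) * w) := by
    show AddCircle.liftIco (2*π) 0 g (0 : AddCircle (2*π)) = _
    rw [← QuotientAddGroup.mk_zero,
      AddCircle.liftIco_coe_apply (by constructor <;> simp [Real.pi_pos.le]; positivity)]
    simp only [hg]
    rw [show w * (((0:ℝ):ℂ) - (π:ℝ)) = -((π:ℂ) * w) by push_cast; ring, Complex.cosh_neg]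
  simp only [fourier_eval_zero, smul_eq_mul, mul_one, hf0] at hps
  simp only [hcoeff] at hps
  have hCne : C ≠ 0 := div_ne_zero (mul_ne_zero hsinh hw0) hπC
  have hps3 : HasSum (fun n : ℤ => (w ^ 2 + (n:ℂ) ^ 2)⁻¹) (Complex.cosh ((π:ℂ) * w) / C) := by
    have h := hps.div_const C
    simpa only [mul_div_cancel_left₀ _ hCne] using h
  rw [hps3.tsum_eq, hC]
  field_simp
end
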